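/- The cost function of the rectilinear k-center problem in R^d, defined as cost(C) = max over clusters C of radius_∞(C) where radius_∞(C) is half the side length of a minimal enclosing axis-aligned cube of C, is (1/(2·sqrt(d)), 1)-regular: it satisfies cost(C) >= (1/(2·sqrt(d)))·max over clusters of the Euclidean diameter, and for any weak r-packing R of a set S', Opt_k(R) <= Opt_k(S') <= Opt_k(R) + r. -/

import Mathlib

/-- A `k`-clustering of `S`: a partition of `S` into at most `k` nonempty parts. -/
def IsClustering {d : ℕ} (S : Finset (EuclideanSpace ℝ (Fin d))) (k : ℕ)
    (𝒞 : Finset (Finset (EuclideanSpace ℝ (Fin d)))) : Prop :=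
  𝒞.card ≤ k ∧ (∀ C ∈ 𝒞, C.Nonempty ∧ C ⊆ S) ∧ (∀ p ∈ S, ∃ C ∈ 𝒞, p ∈ C) ∧
  (∀ C ∈ 𝒞, ∀ C' ∈ 𝒞, C ≠ C' → ∀ p, p ∈ C → p ∉ C')

/-- The optimal cost of a `k`-clustering of `S` under cost function `cost`. -/
noncomputable def Opt {d : ℕ} (cost : Finset (Finset (EuclideanSpace ℝ (Fin d))) → ℝ)
    (k : ℕ) (S : Finset (EuclideanSpace ℝ (Fin d))) : ℝ :=
  sInf {x | ∃ 𝒞, IsClustering S k 𝒞 ∧ cost 𝒞 = x}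

/-- The `L∞`-radius of a finite point set: half the edge length of a smallest
enclosing axis-aligned cube. -/
noncomputable def radiusLinf {d : ℕ} (C : Finset (EuclideanSpace ℝ (Fin d))) : ℝ :=
  sSup {x | ∃ p ∈ C, ∃ q ∈ C, ∃ i, x = |p i - q i|} / 2

/-- The cost of a clustering in the rectilinear `k`-center problem: the maximum
`L∞`-radius of a cluster. -/
noncomputable def costLinfMax {d : ℕ} (𝒞 : Finset (Finset (EuclideanSpace ℝ (Fin d)))) : ℝ :=
  sSup {x | ∃ C ∈ 𝒞, x = radiusLinf C}



open Finset

variable {d : ℕ}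

abbrev Pt (d : ℕ) := EuclideanSpace ℝ (Fin d)

lemma pairSet_finite (C : Finset (Pt d)) :
    {x : ℝ | ∃ p ∈ C, ∃ q ∈ C, ∃ i, x = |p i - q i|}.Finite := by
  have h : {x : ℝ | ∃ p ∈ C, ∃ q ∈ C, ∃ i, x = |p i - q i|} ⊆
      (fun t : Pt d × Pt d × Fin d => |t.1 t.2.2 - t.2.1 t.2.2|) ''
        ((C : Set (Pt d)) ×ˢ ((C : Set (Pt d)) ×ˢ (Set.univ : Set (Fin d)))) := by
    rintro x ⟨p, hp, q, hq, i, rfl⟩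
    exact ⟨⟨p, q, i⟩, ⟨hp, hq, trivial⟩, rfl⟩
  exact ((C.finite_toSet.prod (C.finite_toSet.prod Set.finite_univ)).image _).subset h

lemma pairSet_bdd (C : Finset (Pt d)) :
    BddAbove {x : ℝ | ∃ p ∈ C, ∃ q ∈ C, ∃ i, x = |p i - q i|} :=
  (pairSet_finite C).bddAbove

lemma abs_le_two_radius {C : Finset (Pt d)} {p q : Pt d} (hp : p ∈ C) (hq : q ∈ C) (i : Fin d) :
    |p i - q i| ≤ 2 * radiusLinf C := by
  have := le_csSup (pairSet_bdd C) (show |p i - q i| ∈ _ from ⟨p, hp, q, hq, i, rfl⟩)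
  rw [radiusLinf]; linarith

lemma radiusLinf_nonneg (C : Finset (Pt d)) : 0 ≤ radiusLinf C := by
  rw [radiusLinf]
  rcases Set.eq_empty_or_nonempty {x : ℝ | ∃ p ∈ C, ∃ q ∈ C, ∃ i, x = |p i - q i|} with h | h
  · rw [h, Real.sSup_empty]; norm_num
  · obtain ⟨x, p, hp, q, hq, i, rfl⟩ := h
    have h0 : (0:ℝ) ∈ {x : ℝ | ∃ p ∈ C, ∃ q ∈ C, ∃ i, x = |p i - q i|} :=
      ⟨p, hp, p, hp, i, by simp⟩
    have := le_csSup (pairSet_bdd C) h0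
    linarith

lemma costSet_finite (𝒞 : Finset (Finset (Pt d))) :
    {x : ℝ | ∃ C ∈ 𝒞, x = radiusLinf C}.Finite := by
  have h : {x : ℝ | ∃ C ∈ 𝒞, x = radiusLinf C} ⊆ radiusLinf '' (𝒞 : Set (Finset (Pt d))) := by
    rintro x ⟨C, hC, rfl⟩; exact ⟨C, hC, rfl⟩
  exact (𝒞.finite_toSet.image _).subset h

lemma radiusLinf_le_cost {𝒞 : Finset (Finset (Pt d))} {C : Finset (Pt d)} (hC : C ∈ 𝒞) :
    radiusLinf C ≤ costLinfMax 𝒞 :=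
  le_csSup (costSet_finite 𝒞).bddAbove ⟨C, hC, rfl⟩

lemma costLinfMax_nonneg (𝒞 : Finset (Finset (Pt d))) : 0 ≤ costLinfMax 𝒞 := by
  rcases 𝒞.eq_empty_or_nonempty with rfl | ⟨C, hC⟩
  · rw [costLinfMax]
    convert le_of_eq Real.sSup_empty.symm
    exacts [rfl, by simp]
  · exact (radiusLinf_nonneg C).trans (radiusLinf_le_cost hC)
lemma coord_le_dist (p q : Pt d) (i : Fin d) : |p i - q i| ≤ dist p q := by
  rw [EuclideanSpace.dist_eq]
  have h1 : dist (p i) (q i) ^ 2 ≤ ∑ j, dist (p j) (q j) ^ 2 :=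
    Finset.single_le_sum (f := fun j => dist (p j) (q j) ^ 2) (fun j _ => sq_nonneg _) (Finset.mem_univ i)
  have h2 := Real.sqrt_le_sqrt h1
  rwa [Real.sqrt_sq dist_nonneg, Real.dist_eq] at h2

lemma part1 (hd : 0 < d) (𝒞 : Finset (Finset (Pt d))) (C : Finset (Pt d)) (hC : C ∈ 𝒞)
    (p : Pt d) (hp : p ∈ C) (q : Pt d) (hq : q ∈ C) :
    (1 / (2 * Real.sqrt d)) * dist p q ≤ costLinfMax 𝒞 := by
  have hr := radiusLinf_nonneg C
  have hsd : (0:ℝ) < Real.sqrt d := Real.sqrt_pos.2 (by exact_mod_cast hd)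
  have hdist : dist p q ≤ Real.sqrt d * (2 * radiusLinf C) := by
    rw [EuclideanSpace.dist_eq]
    have h1 : ∑ i, dist (p i) (q i) ^ 2 ≤ ∑ _i : Fin d, (2 * radiusLinf C)^2 := by
      apply Finset.sum_le_sum
      intro i _
      have h := abs_le_two_radius hp hq i
      rw [Real.dist_eq]
      nlinarith [abs_nonneg (p i - q i)]
    calc Real.sqrt (∑ i, dist (p i) (q i) ^ 2)
        ≤ Real.sqrt ((d:ℝ) * (2 * radiusLinf C)^2) := by
          apply Real.sqrt_le_sqrt; simpa using h1
      _ = Real.sqrt d * (2 * radiusLinf C) := by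
          rw [Real.sqrt_mul (by positivity), Real.sqrt_sq (by positivity)]
  have h : (1 / (2 * Real.sqrt d)) * dist p q ≤ radiusLinf C := by
    rw [div_mul_eq_mul_div, one_mul, div_le_iff₀ (by positivity)]
    calc dist p q ≤ Real.sqrt d * (2 * radiusLinf C) := hdist
      _ = radiusLinf C * (2 * Real.sqrt d) := by ring
  exact h.trans (radiusLinf_le_cost hC)

lemma radiusLinf_mono {C C' : Finset (Pt d)} (h : C' ⊆ C) : radiusLinf C' ≤ radiusLinf C := by
  rcases Set.eq_empty_or_nonempty {x : ℝ | ∃ p ∈ C', ∃ q ∈ C', ∃ i, x = |p i - q i|} with he | hne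
  · rw [radiusLinf, he, Real.sSup_empty]
    simpa using radiusLinf_nonneg C
  · have hle : sSup {x : ℝ | ∃ p ∈ C', ∃ q ∈ C', ∃ i, x = |p i - q i|} ≤ 2 * radiusLinf C := by
      apply csSup_le hne
      rintro x ⟨p, hp, q, hq, i, rfl⟩
      exact abs_le_two_radius (h hp) (h hq) i
    rw [radiusLinf, radiusLinf] at *
    linarith

lemma cost_le_of_forall {𝒞 : Finset (Finset (Pt d))} {b : ℝ} (hb : 0 ≤ b)
    (h : ∀ C ∈ 𝒞, radiusLinf C ≤ b) : costLinfMax 𝒞 ≤ b := by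
  rcases Set.eq_empty_or_nonempty {x : ℝ | ∃ C ∈ 𝒞, x = radiusLinf C} with he | hne
  · rw [costLinfMax, he, Real.sSup_empty]; exact hb
  · rw [costLinfMax]
    apply csSup_le hne
    rintro x ⟨C, hC, rfl⟩
    exact h C hC

lemma clustering_exists (S : Finset (Pt d)) (k : ℕ) (hk : 1 ≤ k) :
    ∃ 𝒞, IsClustering S k 𝒞 := by
  rcases S.eq_empty_or_nonempty with rfl | hS
  · exact ⟨∅, by simp [IsClustering]⟩
  · refine ⟨{S}, ?_, ?_, ?_, ?_⟩
    · simpa using hk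
    · intro C hC; rw [Finset.mem_singleton] at hC; subst hC; exact ⟨hS, le_refl _⟩
    · intro p hp; exact ⟨S, Finset.mem_singleton_self S, hp⟩
    · intro C hC C' hC' hne
      rw [Finset.mem_singleton] at hC hC'; subst hC; subst hC'; exact absurd rfl hne

lemma optSet_bddBelow (S : Finset (Pt d)) (k : ℕ) :
    BddBelow {x : ℝ | ∃ 𝒞, IsClustering S k 𝒞 ∧ costLinfMax 𝒞 = x} :=
  ⟨0, by rintro x ⟨𝒞, _, rfl⟩; exact costLinfMax_nonneg 𝒞⟩
lemma opt_R_le (S' R : Finset (Pt d)) (hRS : R ⊆ S') (k : ℕ) (hk : 2 ≤ k) :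
    Opt costLinfMax k R ≤ Opt costLinfMax k S' := by
  classical
  unfold Opt
  obtain ⟨𝒞0, h0⟩ := clustering_exists S' k (by omega)
  refine le_csInf ⟨costLinfMax 𝒞0, ⟨𝒞0, h0, rfl⟩⟩ ?_
  rintro x ⟨𝒞, ⟨hcard, hparts, hcover, hdisj⟩, rfl⟩
  set 𝒞' := (𝒞.image (· ∩ R)).filter (fun D => D.Nonempty) with h𝒞'
  have hclus : IsClustering R k 𝒞' := by
    refine ⟨?_, ?_, ?_, ?_⟩
    · exact le_trans (le_trans (Finset.card_filter_le _ _) Finset.card_image_le) hcard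
    · intro D hD
      simp only [h𝒞', Finset.mem_filter, Finset.mem_image] at hD
      obtain ⟨⟨C, hC, rfl⟩, hne⟩ := hD
      exact ⟨hne, Finset.inter_subset_right⟩
    · intro p hp
      obtain ⟨C, hC, hpC⟩ := hcover p (hRS hp)
      refine ⟨C ∩ R, ?_, Finset.mem_inter.2 ⟨hpC, hp⟩⟩
      simp only [h𝒞', Finset.mem_filter, Finset.mem_image]
      exact ⟨⟨C, hC, rfl⟩, ⟨p, Finset.mem_inter.2 ⟨hpC, hp⟩⟩⟩
    · intro D hD D' hD' hne p hpD hpD'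
      simp only [h𝒞', Finset.mem_filter, Finset.mem_image] at hD hD'
      obtain ⟨⟨C, hC, rfl⟩, _⟩ := hD
      obtain ⟨⟨C', hC', rfl⟩, _⟩ := hD'
      have hCC' : C ≠ C' := by rintro rfl; exact hne rfl
      exact hdisj C hC C' hC' hCC' p (Finset.mem_inter.1 hpD).1 (Finset.mem_inter.1 hpD').1
  have hcost : costLinfMax 𝒞' ≤ costLinfMax 𝒞 := by
    apply cost_le_of_forall (costLinfMax_nonneg 𝒞)
    intro D hD
    simp only [h𝒞', Finset.mem_filter, Finset.mem_image] at hD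
    obtain ⟨⟨C, hC, rfl⟩, _⟩ := hD
    exact (radiusLinf_mono Finset.inter_subset_left).trans (radiusLinf_le_cost hC)
  exact le_trans (csInf_le (optSet_bddBelow R k) ⟨𝒞', hclus, rfl⟩) hcost

lemma opt_S_le (S' R : Finset (Pt d)) (r : ℝ) (hr : 0 ≤ r) (hRS : R ⊆ S')
    (hpack : ∀ p ∈ S', ∃ q ∈ R, dist p q ≤ r) (k : ℕ) (hk : 2 ≤ k) :
    Opt costLinfMax k S' ≤ Opt costLinfMax k R + r := by
  classical
  unfold Opt
  obtain ⟨𝒞0, h0⟩ := clustering_exists R k (by omega)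
  have key : ∀ x ∈ {x : ℝ | ∃ 𝒞, IsClustering R k 𝒞 ∧ costLinfMax 𝒞 = x},
      sInf {x : ℝ | ∃ 𝒞, IsClustering S' k 𝒞 ∧ costLinfMax 𝒞 = x} - r ≤ x := by
    rintro x ⟨𝒞, ⟨hcard, hparts, hcover, hdisj⟩, rfl⟩
    have H : ∀ p : Pt d, ∃ C : Finset (Pt d),
        p ∈ S' → C ∈ 𝒞 ∧ (∃ a ∈ C, dist p a ≤ r) ∧ (p ∈ R → p ∈ C) := by
      intro p
      by_cases hp : p ∈ S'
      · by_cases hpR : p ∈ R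
        · obtain ⟨C, hC, hpC⟩ := hcover p hpR
          exact ⟨C, fun _ => ⟨hC, ⟨p, hpC, by simp [hr]⟩, fun _ => hpC⟩⟩
        · obtain ⟨q, hqR, hq⟩ := hpack p hp
          obtain ⟨C, hC, hqC⟩ := hcover q hqR
          exact ⟨C, fun _ => ⟨hC, ⟨q, hqC, hq⟩, fun hpR' => absurd hpR' hpR⟩⟩
      · exact ⟨∅, fun hp' => absurd hp' hp⟩
    choose g hg using H
    have hgC : ∀ C ∈ 𝒞, ∀ p ∈ C, g p = C := by
      intro C hC p hpC
      have hpR : p ∈ R := (hparts C hC).2 hpC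
      have hpS : p ∈ S' := hRS hpR
      obtain ⟨hgmem, _, hgR⟩ := hg p hpS
      by_contra hne
      exact hdisj (g p) hgmem C hC hne p (hgR hpR) hpC
    set E : Finset (Pt d) → Finset (Pt d) := fun C => S'.filter (fun p => g p = C) with hE
    have hCE : ∀ C ∈ 𝒞, C ⊆ E C := by
      intro C hC p hpC
      simp only [hE, Finset.mem_filter]
      exact ⟨hRS ((hparts C hC).2 hpC), hgC C hC p hpC⟩
    set 𝒞'' := 𝒞.image E with h𝒞''
    have hclus : IsClustering S' k 𝒞'' := by
      refine ⟨le_trans Finset.card_image_le hcard, ?_, ?_, ?_⟩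
      · intro D hD
        simp only [h𝒞'', Finset.mem_image] at hD
        obtain ⟨C, hC, rfl⟩ := hD
        refine ⟨((hparts C hC).1).mono (hCE C hC), ?_⟩
        simp only [hE]
        exact Finset.filter_subset _ _
      · intro p hp
        obtain ⟨hgmem, _, _⟩ := hg p hp
        refine ⟨E (g p), Finset.mem_image_of_mem E hgmem, ?_⟩
        simp only [hE, Finset.mem_filter]
        exact ⟨hp, trivial⟩
      · intro D hD D' hD' hne p hpD hpD'
        simp only [h𝒞'', Finset.mem_image] at hD hD'
        obtain ⟨C, hC, rfl⟩ := hD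
        obtain ⟨C', hC', rfl⟩ := hD'
        simp only [hE, Finset.mem_filter] at hpD hpD'
        exact hne (by rw [← hpD.2, ← hpD'.2])
    have hcost : costLinfMax 𝒞'' ≤ costLinfMax 𝒞 + r := by
      apply cost_le_of_forall (by linarith [costLinfMax_nonneg 𝒞])
      intro D hD
      simp only [h𝒞'', Finset.mem_image] at hD
      obtain ⟨C, hC, rfl⟩ := hD
      have hEC : radiusLinf (E C) ≤ radiusLinf C + r := by
        rcases Set.eq_empty_or_nonempty
            {y : ℝ | ∃ p ∈ E C, ∃ q ∈ E C, ∃ i, y = |p i - q i|} with he | hne2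
        · rw [radiusLinf, he, Real.sSup_empty]
          have := radiusLinf_nonneg C; linarith
        · have hle : sSup {y : ℝ | ∃ p ∈ E C, ∃ q ∈ E C, ∃ i, y = |p i - q i|}
              ≤ 2 * radiusLinf C + 2 * r := by
            apply csSup_le hne2
            rintro y ⟨p, hp, q, hq, i, rfl⟩
            simp only [hE, Finset.mem_filter] at hp hq
            obtain ⟨hpS, hpg⟩ := hp
            obtain ⟨hqS, hqg⟩ := hq
            obtain ⟨_, ⟨a, haC, hpa⟩, _⟩ := hg p hpS
            obtain ⟨_, ⟨b, hbC, hqb⟩, _⟩ := hg q hqS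
            rw [hpg] at haC
            rw [hqg] at hbC
            have h1 : |p i - a i| ≤ r := (coord_le_dist p a i).trans hpa
            have h2 : |q i - b i| ≤ r := (coord_le_dist q b i).trans hqb
            have h3 : |a i - b i| ≤ 2 * radiusLinf C := abs_le_two_radius haC hbC i
            have h4 := abs_sub_le (p i) (a i) (q i)
            have h5 := abs_sub_le (a i) (b i) (q i)
            have h6 : |b i - q i| = |q i - b i| := abs_sub_comm _ _
            linarith
          rw [radiusLinf]
          linarith
      linarith [radiusLinf_le_cost hC]
    have h1 : sInf {x : ℝ | ∃ 𝒞, IsClustering S' k 𝒞 ∧ costLinfMax 𝒞 = x} ≤ costLinfMax 𝒞'' :=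
      csInf_le (optSet_bddBelow S' k) ⟨𝒞'', hclus, rfl⟩
    linarith
  have h2 := le_csInf (s := {x : ℝ | ∃ 𝒞, IsClustering R k 𝒞 ∧ costLinfMax 𝒞 = x})
    ⟨costLinfMax 𝒞0, ⟨𝒞0, h0, rfl⟩⟩ key
  linarith
/-- The rectilinear `k`-center cost function is
`(1/(2√d), 1)`-regular: diameter-sensitivity with constant `1/(2√d)`, and the
expansion property `Opt_k(R) ≤ Opt_k(S') ≤ Opt_k(R) + r` for weak `r`-packings. -/
theorem rectilinear_kcenter_regular (d : ℕ) (hd : 0 < d) :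
    (∀ 𝒞 : Finset (Finset (EuclideanSpace ℝ (Fin d))),
      ∀ C ∈ 𝒞, ∀ p ∈ C, ∀ q ∈ C,
        (1 / (2 * Real.sqrt d)) * dist p q ≤ costLinfMax 𝒞) ∧
    (∀ (S' R : Finset (EuclideanSpace ℝ (Fin d))) (r : ℝ), 0 ≤ r → R ⊆ S' →
      (∀ p ∈ S', ∃ q ∈ R, dist p q ≤ r) →
      ∀ k : ℕ, 2 ≤ k →
        Opt costLinfMax k R ≤ Opt costLinfMax k S' ∧
        Opt costLinfMax k S' ≤ Opt costLinfMax k R + r) := by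
  constructor
  · intro 𝒞 C hC p hp q hq
    exact part1 hd 𝒞 C hC p hp q hq
  · intro S' R r hr hRS hpack k hk
    exact ⟨opt_R_le S' R hRS k hk, opt_S_le S' R r hr hRS hpack k hk⟩
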